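/- In the commutative monoid Q presented by ⟨x, z, a, b | x² = 1, a² = 1, z⁴ = z², b⁴ = b², abz = b, b³x = b², z³a = z²⟩, the identity a*b = z*b holds. -/
import Mathlib

/-- In the misère quotient of 0.123, `a * b = z * b`. -/
theorem stmt10 {Q : Type*} [CommMonoid Q] (x z a b : Q)
    (hx : x ^ 2 = 1) (ha : a ^ 2 = 1) (hz : z ^ 4 = z ^ 2) (hb : b ^ 4 = b ^ 2)
    (habz : a * b * z = b) (hbx : b ^ 3 * x = b ^ 2) (hza : z ^ 3 * a = z ^ 2) :
    a * b = z * b := by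
  have h : a * (a * b * z) = a * b := by rw [habz]
  rw [← h, ← mul_assoc, ← mul_assoc, ← pow_two, ha, one_mul, mul_comm]
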